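/- Let σ > 0 and D ≥ 1. Let A be an invertible D×D complex matrix with Frobenius norm 0 < ‖A‖_F < 1, let b ∈ ℂ^D, and set φ(z) = Az + b. If (g_m) is any sequence of measurable functions ℂ^D → ℂ that are square-integrable with respect to the Laplacian measure μ_L and whose L²(μ_L)-norms converge to 0, then each composition g_m ∘ φ is square-integrable with respect to μ_L and the L²(μ_L)-norms of g_m ∘ φ also converge to 0. -/

import Mathlib

open MeasureTheory Real Filter
open scoped BigOperators Topology ENNReal NNReal

set_option maxHeartbeats 1000000

/-- The Euclidean norm `‖z‖₂` on `ℂ^D`. -/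
noncomputable def euclNorm (D : ℕ) (z : Fin D → ℂ) : ℝ :=
  Real.sqrt (∑ i, ‖z i‖ ^ 2)

/-- The Frobenius norm `‖A‖_F = (∑_{i,j} |a_{ij}|²)^{1/2}` of a complex matrix. -/
noncomputable def frobNorm (D : ℕ) (A : Matrix (Fin D) (Fin D) ℂ) : ℝ :=
  Real.sqrt (∑ i, ∑ j, ‖A i j‖ ^ 2)

/-- The Laplacian measure `dμ_L(z) = (2πσ²)^{-D} exp(−‖z‖₂/σ) dV(z)` on `ℂ^D ≅ ℝ^{2D}`. -/
noncomputable def lapMeasure (σ : ℝ) (D : ℕ) : Measure (Fin D → ℂ) :=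
  volume.withDensity fun z =>
    ENNReal.ofReal (((2 * π * σ ^ 2) ^ D)⁻¹ * Real.exp (-(euclNorm D z) / σ))

lemma euclNorm_eq (D : ℕ) (z : Fin D → ℂ) :
    euclNorm D z = ‖(WithLp.equiv 2 (Fin D → ℂ)).symm z‖ := by
  rw [EuclideanSpace.norm_eq]
  simp [euclNorm]

lemma euclNorm_nonneg (D : ℕ) (z : Fin D → ℂ) : 0 ≤ euclNorm D z :=
  Real.sqrt_nonneg _

lemma euclNorm_add_le (D : ℕ) (x y : Fin D → ℂ) :
    euclNorm D (x + y) ≤ euclNorm D x + euclNorm D y := by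
  simp only [euclNorm_eq]
  exact norm_add_le _ _

lemma euclNorm_mulVec_le (D : ℕ) (A : Matrix (Fin D) (Fin D) ℂ) (z : Fin D → ℂ) :
    euclNorm D (A.mulVec z) ≤ frobNorm D A * euclNorm D z := by
  have h1 : ∀ i, ‖A.mulVec z i‖ ^ 2 ≤
      (∑ j, ‖A i j‖ ^ 2) * (∑ j, ‖z j‖ ^ 2) := by
    intro i
    have : ‖A.mulVec z i‖ ≤ ∑ j, ‖A i j‖ * ‖z j‖ := by
      refine le_trans ?_ (Finset.sum_le_sum fun j _ => le_of_eq (norm_mul _ _))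
      exact (norm_sum_le Finset.univ fun j => A i j * z j)
    calc ‖A.mulVec z i‖ ^ 2
        ≤ (∑ j, ‖A i j‖ * ‖z j‖) ^ 2 := by
          exact pow_le_pow_left₀ (norm_nonneg _) this 2
      _ ≤ (∑ j, ‖A i j‖ ^ 2) * (∑ j, ‖z j‖ ^ 2) :=
          Finset.sum_mul_sq_le_sq_mul_sq _ _ _
  have h2 : ∑ i, ‖A.mulVec z i‖ ^ 2 ≤
      (∑ i, ∑ j, ‖A i j‖ ^ 2) * (∑ j, ‖z j‖ ^ 2) := by
    rw [Finset.sum_mul]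
    exact Finset.sum_le_sum fun i _ => h1 i
  have := Real.sqrt_le_sqrt h2
  rw [Real.sqrt_mul (by positivity)] at this
  exact this

lemma euclNorm_continuous (D : ℕ) : Continuous (euclNorm D) := by
  unfold euclNorm
  exact Real.continuous_sqrt.comp (continuous_finset_sum _ fun i _ =>
    (continuous_norm.comp (continuous_apply i)).pow 2)

lemma key_bound (σ : ℝ) (hσ : 0 < σ) (D : ℕ)
    (A : Matrix (Fin D) (Fin D) ℂ) (hA : IsUnit A.det) (hF1 : frobNorm D A ≤ 1)
    (b : Fin D → ℂ) :
    ∃ C : ℝ≥0∞, C ≠ ⊤ ∧ ∀ f : (Fin D → ℂ) → ℂ, Measurable f →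
      ∫⁻ z, (‖f (A.mulVec z + b)‖₊ : ℝ≥0∞) ^ (2:ℝ) ∂(lapMeasure σ D)
        ≤ C * ∫⁻ z, (‖f z‖₊ : ℝ≥0∞) ^ (2:ℝ) ∂(lapMeasure σ D) := by
  classical
  have hAU : IsUnit A := (Matrix.isUnit_iff_isUnit_det A).mpr hA
  set L : (Fin D → ℂ) →ₗ[ℝ] (Fin D → ℂ) := (A.mulVecLin).restrictScalars ℝ with hL
  have hLapp : ∀ z, L z = A.mulVec z := fun z => rfl
  have hcoe : ⇑L = A.mulVec := funext hLapp
  have hbij : Function.Bijective L := by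
    rw [hcoe]
    exact ⟨Matrix.mulVec_injective_iff_isUnit.mpr hAU,
      Matrix.mulVec_surjective_iff_isUnit.mpr hAU⟩
  have hdet : LinearMap.det L ≠ 0 := by
    have h := LinearEquiv.isUnit_det' (LinearEquiv.ofBijective L hbij)
    have hc : ((LinearEquiv.ofBijective L hbij) : (Fin D → ℂ) →ₗ[ℝ] (Fin D → ℂ)) = L := rfl
    rw [hc] at h
    exact h.ne_zero
  have hLmeas : Measurable L := L.continuous_of_finiteDimensional.measurable
  have hφmeas : Measurable fun z : Fin D → ℂ => A.mulVec z + b := by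
    have : (fun z : Fin D → ℂ => A.mulVec z + b) = (fun w => w + b) ∘ L := by
      funext z; simp [hLapp]
    rw [this]
    exact (measurable_add_const b).comp hLmeas
  -- density
  set ρ : (Fin D → ℂ) → ℝ≥0∞ := fun z =>
    ENNReal.ofReal (((2 * π * σ ^ 2) ^ D)⁻¹ * Real.exp (-(euclNorm D z) / σ)) with hρ
  have hρmeas : Measurable ρ := by
    apply ENNReal.measurable_ofReal.comp
    exact (measurable_const.mul ((euclNorm_continuous D).measurable.neg.div_const σ).exp)
  -- pointwise density comparison
  set K : ℝ≥0∞ := ENNReal.ofReal (Real.exp (euclNorm D b / σ)) with hK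
  have hptwise : ∀ z, ρ z ≤ K * ρ (A.mulVec z + b) := by
    intro z
    rw [hρ, hK, mul_comm K, ← ENNReal.ofReal_mul (by positivity)]
    apply ENNReal.ofReal_le_ofReal
    have hc : (0:ℝ) ≤ ((2 * π * σ ^ 2) ^ D)⁻¹ := by positivity
    have h1 : euclNorm D (A.mulVec z + b) ≤ euclNorm D z + euclNorm D b := by
      refine le_trans (euclNorm_add_le D _ _) ?_
      have := euclNorm_mulVec_le D A z
      nlinarith [euclNorm_nonneg D z, euclNorm_nonneg D (A.mulVec z)]
    have h2 : Real.exp (-(euclNorm D z) / σ)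
        ≤ Real.exp (-(euclNorm D (A.mulVec z + b)) / σ) * Real.exp (euclNorm D b / σ) := by
      rw [← Real.exp_add]
      apply Real.exp_le_exp.2
      rw [← add_div, div_eq_mul_inv, div_eq_mul_inv]
      have hσ' : (0:ℝ) ≤ σ⁻¹ := by positivity
      exact mul_le_mul_of_nonneg_right (by linarith) hσ'
    have h3 := mul_le_mul_of_nonneg_left h2 hc
    linarith [h3]
  have hmap : Measure.map (fun z => A.mulVec z + b) volume
      = ENNReal.ofReal |(LinearMap.det L)⁻¹| • (volume : Measure (Fin D → ℂ)) := by
    have h1 : (fun z : Fin D → ℂ => A.mulVec z + b) = (fun w => w + b) ∘ L := by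
      funext z; simp [hLapp]
    rw [h1, ← Measure.map_map (measurable_add_const b) hLmeas,
      Measure.map_linearMap_addHaar_eq_smul_addHaar volume hdet,
      Measure.map_smul, map_add_right_eq_self]
  refine ⟨K * ENNReal.ofReal |(LinearMap.det L)⁻¹|, by finiteness, ?_⟩
  intro f hf
  set F : (Fin D → ℂ) → ℝ≥0∞ := fun z => (‖f z‖₊ : ℝ≥0∞) ^ (2:ℝ) with hFdef
  have hFmeas : Measurable F := (hf.nnnorm.coe_nnreal_ennreal).pow_const _
  have hG : Measurable fun z => ρ z * F z := hρmeas.mul hFmeas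
  have hcomp : (fun z => (‖f (A.mulVec z + b)‖₊ : ℝ≥0∞) ^ (2:ℝ))
      = fun z => F (A.mulVec z + b) := rfl
  rw [lapMeasure, hcomp,
    lintegral_withDensity_eq_lintegral_mul _ hρmeas
      (show Measurable fun z => F (A.mulVec z + b) from hFmeas.comp hφmeas),
    lintegral_withDensity_eq_lintegral_mul _ hρmeas hFmeas]
  simp only [Pi.mul_apply, Function.comp_apply]
  calc ∫⁻ z, ρ z * F (A.mulVec z + b) ∂volume
      ≤ ∫⁻ z, K * (ρ (A.mulVec z + b) * F (A.mulVec z + b)) ∂volume := by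
        apply lintegral_mono
        intro z
        calc ρ z * F (A.mulVec z + b)
            ≤ (K * ρ (A.mulVec z + b)) * F (A.mulVec z + b) :=
              mul_le_mul_left (hptwise z) _
          _ = K * (ρ (A.mulVec z + b) * F (A.mulVec z + b)) := by ring
    _ = K * ∫⁻ z, ρ (A.mulVec z + b) * F (A.mulVec z + b) ∂volume :=
        lintegral_const_mul _ (hG.comp hφmeas)
    _ = K * ∫⁻ z, ρ z * F z ∂(Measure.map (fun z => A.mulVec z + b) volume) := by
        rw [lintegral_map hG hφmeas]
    _ = K * (ENNReal.ofReal |(LinearMap.det L)⁻¹| * ∫⁻ z, ρ z * F z ∂volume) := by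
        rw [hmap, lintegral_smul_measure, smul_eq_mul]
    _ = K * ENNReal.ofReal |(LinearMap.det L)⁻¹| * ∫⁻ z, ρ z * F z ∂volume := by ring

/-- closability of the Koopman operator with affine symbol, Theorem 6.5
of the paper.  Let `φ(z) = Az + b` with `A` invertible and `0 < ‖A‖_F < 1`.  If `(g_m)`
is a sequence of measurable functions that are square-integrable for the Laplacian
measure `μ_L` whose `L²(μ_L)`-norms tend to `0`, then every `g_m ∘ φ` is
square-integrable for `μ_L` and the `L²(μ_L)`-norms of `g_m ∘ φ` tend to `0`. -/
theorem koopman_affine_closable (σ : ℝ) (hσ : 0 < σ) (D : ℕ) (hD : 1 ≤ D)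
    (A : Matrix (Fin D) (Fin D) ℂ) (hA : IsUnit A.det)
    (hF0 : 0 < frobNorm D A) (hF1 : frobNorm D A < 1)
    (b : Fin D → ℂ) (g : ℕ → (Fin D → ℂ) → ℂ)
    (hmeas : ∀ m, Measurable (g m))
    (hL2 : ∀ m, MemLp (g m) 2 (lapMeasure σ D))
    (hlim : Tendsto (fun m => eLpNorm (g m) 2 (lapMeasure σ D)) atTop (𝓝 0)) :
    (∀ m, MemLp (fun z => g m (A.mulVec z + b)) 2 (lapMeasure σ D))
    ∧ Tendsto (fun m => eLpNorm (fun z => g m (A.mulVec z + b)) 2 (lapMeasure σ D))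
        atTop (𝓝 0) := by
  obtain ⟨C, hC, hbound⟩ := key_bound σ hσ D A hA hF1.le b
  set μ := lapMeasure σ D with hμ
  have hφmeas : Measurable fun z : Fin D → ℂ => A.mulVec z + b := by
    have h1 : Continuous fun z : Fin D → ℂ => A.mulVec z :=
      ((A.mulVecLin.restrictScalars ℝ).continuous_of_finiteDimensional : _)
    exact (h1.add continuous_const).measurable
  have hsnorm : ∀ f : (Fin D → ℂ) → ℂ,
      eLpNorm f 2 μ = (∫⁻ z, (‖f z‖₊ : ℝ≥0∞) ^ (2:ℝ) ∂μ) ^ (1/(2:ℝ)) := by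
    intro f
    rw [eLpNorm_eq_lintegral_rpow_enorm_toReal two_ne_zero ENNReal.ofNat_ne_top]
    norm_num [enorm_eq_nnnorm]
  have key : ∀ f : (Fin D → ℂ) → ℂ, Measurable f →
      eLpNorm (fun z => f (A.mulVec z + b)) 2 μ ≤ C ^ (1/(2:ℝ)) * eLpNorm f 2 μ := by
    intro f hf
    rw [hsnorm, hsnorm]
    calc (∫⁻ z, (‖f (A.mulVec z + b)‖₊ : ℝ≥0∞) ^ (2:ℝ) ∂μ) ^ (1/(2:ℝ))
        ≤ (C * ∫⁻ z, (‖f z‖₊ : ℝ≥0∞) ^ (2:ℝ) ∂μ) ^ (1/(2:ℝ)) :=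
          ENNReal.rpow_le_rpow (hbound f hf) (by norm_num)
      _ = C ^ (1/(2:ℝ)) * (∫⁻ z, (‖f z‖₊ : ℝ≥0∞) ^ (2:ℝ) ∂μ) ^ (1/(2:ℝ)) :=
          ENNReal.mul_rpow_of_nonneg _ _ (by norm_num)
  have hC2 : C ^ (1/(2:ℝ)) ≠ ⊤ := ENNReal.rpow_ne_top_of_nonneg (by norm_num) hC
  refine ⟨fun m => ⟨((hmeas m).comp hφmeas).aestronglyMeasurable, ?_⟩, ?_⟩
  · exact lt_of_le_of_lt (key _ (hmeas m))
      (ENNReal.mul_lt_top hC2.lt_top (hL2 m).2)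
  · have h0 : Tendsto (fun m => C ^ (1/(2:ℝ)) * eLpNorm (g m) 2 μ) atTop (𝓝 0) := by
      have := ENNReal.Tendsto.const_mul (a := C ^ (1/(2:ℝ))) hlim (Or.inr hC2)
      simpa using this
    exact tendsto_of_tendsto_of_tendsto_of_le_of_le tendsto_const_nhds h0
      (fun m => zero_le) (fun m => key _ (hmeas m))
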